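/- (Resolvent estimate for the adjoint system) Let σ > 0, let n be a nonzero integer, and let λ > 0. Suppose ζ : ℝ → ℝ is twice continuously differentiable on [−1, 1], ℓ ∈ ℝ, f : [−1, 1] → ℝ is continuous, and g ∈ ℝ satisfy λ·ζ(x) − ζ''(x) + n²·ζ(x) = f(x) for all x ∈ [−1, 1], λ·ℓ + σ·n²·ζ'(1) = g, ζ(−1) = 0, and ζ(1) = ℓ. Then λ²·( ∫_{−1}^{1} ζ(x)² dx + ℓ²/(σ·n²) ) ≤ ∫_{−1}^{1} f(x)² dx + g²/(σ·n²). -/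

import Mathlib

open Set

/-- Resolvent estimate for the adjoint projected system: if `σ > 0`, `n ≠ 0`, `λ > 0` and
`(ζ, ℓ)` solves `λ·ζ - ζ'' + n²·ζ = f` on `[-1,1]`, `λ·ℓ + σ·n²·ζ'(1) = g`, `ζ(-1) = 0`,
`ζ(1) = ℓ`, then `λ²·(∫ζ² + ℓ²/(σn²)) ≤ ∫f² + g²/(σn²)`. -/
theorem stmt3 (σ : ℝ) (hσ : 0 < σ) (n : ℤ) (hn : n ≠ 0) (lam : ℝ) (hlam : 0 < lam)
    (ζ ζ' ζ'' : ℝ → ℝ) (ℓ : ℝ) (f : ℝ → ℝ) (g : ℝ)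
    (hζ' : ∀ x ∈ Icc (-1:ℝ) 1, HasDerivWithinAt ζ (ζ' x) (Icc (-1:ℝ) 1) x)
    (hζ'' : ∀ x ∈ Icc (-1:ℝ) 1, HasDerivWithinAt ζ' (ζ'' x) (Icc (-1:ℝ) 1) x)
    (hcont : ContinuousOn ζ'' (Icc (-1:ℝ) 1))
    (hf : ContinuousOn f (Icc (-1:ℝ) 1))
    (heq : ∀ x ∈ Icc (-1:ℝ) 1, lam * ζ x - ζ'' x + (n:ℝ)^2 * ζ x = f x)
    (hbc : lam * ℓ + σ * (n:ℝ)^2 * ζ' 1 = g)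
    (hbot : ζ (-1) = 0)
    (htop : ζ 1 = ℓ) :
    lam^2 * ((∫ x in (-1:ℝ)..1, ζ x ^ 2) + ℓ^2 / (σ * (n:ℝ)^2))
      ≤ (∫ x in (-1:ℝ)..1, f x ^ 2) + g^2 / (σ * (n:ℝ)^2) := by
  have h1 : (-1:ℝ) ≤ 1 := by norm_num
  have huIcc : uIcc (-1:ℝ) 1 = Icc (-1:ℝ) 1 := uIcc_of_le h1
  have hn' : ((n:ℝ))^2 ≠ 0 := pow_ne_zero _ (Int.cast_ne_zero.mpr hn)
  have hn2 : (0:ℝ) < (n:ℝ)^2 := lt_of_le_of_ne (sq_nonneg _) (Ne.symm hn')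
  set s : ℝ := σ * (n:ℝ)^2 with hsdef
  have hspos : 0 < s := mul_pos hσ hn2
  have hcζ : ContinuousOn ζ (Icc (-1:ℝ) 1) := fun x hx => (hζ' x hx).continuousWithinAt
  have hcζ' : ContinuousOn ζ' (Icc (-1:ℝ) 1) := fun x hx => (hζ'' x hx).continuousWithinAt
  -- integrability facts
  have intζ2 : IntervalIntegrable (fun x => ζ x ^ 2) MeasureTheory.volume (-1) 1 :=
    ContinuousOn.intervalIntegrable (by rw [huIcc]; exact hcζ.pow 2)
  have intζ'2 : IntervalIntegrable (fun x => ζ' x ^ 2) MeasureTheory.volume (-1) 1 :=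
    ContinuousOn.intervalIntegrable (by rw [huIcc]; exact hcζ'.pow 2)
  have intf2 : IntervalIntegrable (fun x => f x ^ 2) MeasureTheory.volume (-1) 1 :=
    ContinuousOn.intervalIntegrable (by rw [huIcc]; exact hf.pow 2)
  have intfζ : IntervalIntegrable (fun x => f x * ζ x) MeasureTheory.volume (-1) 1 :=
    ContinuousOn.intervalIntegrable (by rw [huIcc]; exact hf.mul hcζ)
  have intB : IntervalIntegrable (fun x => ζ'' x * ζ x + ζ' x * ζ' x)
      MeasureTheory.volume (-1) 1 :=
    ContinuousOn.intervalIntegrable (by rw [huIcc]; exact (hcont.mul hcζ).add (hcζ'.mul hcζ'))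
  have intA : IntervalIntegrable (fun x => (lam + (n:ℝ)^2) * ζ x ^ 2)
      MeasureTheory.volume (-1) 1 := intζ2.const_mul _
  -- FTC for (ζ' * ζ)'
  have key : (∫ x in (-1:ℝ)..1, (ζ'' x * ζ x + ζ' x * ζ' x))
      = ζ' 1 * ζ 1 - ζ' (-1) * ζ (-1) := by
    apply intervalIntegral.integral_eq_sub_of_hasDeriv_right_of_le
      (f := fun x => ζ' x * ζ x) (f' := fun x => ζ'' x * ζ x + ζ' x * ζ' x) h1
    · exact hcζ'.mul hcζ
    · intro x hx
      have hx' : x ∈ Icc (-1:ℝ) 1 := Ioo_subset_Icc_self hx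
      have hmem : Icc (-1:ℝ) 1 ∈ nhds x := Icc_mem_nhds hx.1 hx.2
      have d1 : HasDerivAt ζ (ζ' x) x := (hζ' x hx').hasDerivAt hmem
      have d2 : HasDerivAt ζ' (ζ'' x) x := (hζ'' x hx').hasDerivAt hmem
      exact (d2.mul d1).hasDerivWithinAt
    · exact intB
  set I2 : ℝ := ∫ x in (-1:ℝ)..1, ζ x ^ 2 with hI2def
  set I1 : ℝ := ∫ x in (-1:ℝ)..1, ζ' x ^ 2 with hI1def
  set ID : ℝ := ∫ x in (-1:ℝ)..1, f x ^ 2 with hIDdef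
  set IF : ℝ := ∫ x in (-1:ℝ)..1, f x * ζ x with hIFdef
  have hI2 : 0 ≤ I2 := intervalIntegral.integral_nonneg h1 (fun x _ => sq_nonneg _)
  have hI1 : 0 ≤ I1 := intervalIntegral.integral_nonneg h1 (fun x _ => sq_nonneg _)
  -- identity for IF
  have hIFeq : IF = (lam + (n:ℝ)^2) * I2 + I1 - ζ' 1 * ℓ := by
    have hcongr : IF = ∫ x in (-1:ℝ)..1,
        ((lam + (n:ℝ)^2) * ζ x ^ 2 - (ζ'' x * ζ x + ζ' x * ζ' x) + ζ' x ^ 2) := by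
      apply intervalIntegral.integral_congr
      intro x hx
      rw [huIcc] at hx
      have := heq x hx
      simp only
      linear_combination (-ζ x) * this
    rw [hcongr, intervalIntegral.integral_add (intA.sub intB) intζ'2,
        intervalIntegral.integral_sub intA intB, key,
        intervalIntegral.integral_const_mul, htop, hbot]
    ring
  -- pointwise AM-GM bound and integral monotonicity
  have hmono : IF ≤ ∫ x in (-1:ℝ)..1, (f x ^ 2 / (2*lam) + lam * ζ x ^ 2 / 2) := by
    apply intervalIntegral.integral_mono_on h1 intfζ
      ((intf2.div_const _).add ((intζ2.const_mul lam).div_const 2))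
    intro x hx
    rw [← sub_nonneg]
    have hrw : f x ^ 2 / (2*lam) + lam * ζ x ^ 2 / 2 - f x * ζ x
        = (f x - lam * ζ x)^2 / (2*lam) := by
      field_simp
      ring
    rw [hrw]
    positivity
  have hsplit : (∫ x in (-1:ℝ)..1, (f x ^ 2 / (2*lam) + lam * ζ x ^ 2 / 2))
      = ID / (2*lam) + lam * I2 / 2 := by
    rw [intervalIntegral.integral_add (intf2.div_const _) ((intζ2.const_mul lam).div_const 2)]
    rw [intervalIntegral.integral_div, intervalIntegral.integral_div,
        intervalIntegral.integral_const_mul]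
  rw [hsplit] at hmono
  -- multiply through by 2*lam
  have hIF2 : 2*lam*IF ≤ ID + lam^2 * I2 := by
    have h2l : (0:ℝ) < 2*lam := by linarith
    have := mul_le_mul_of_nonneg_left hmono h2l.le
    calc 2*lam*IF ≤ 2*lam*(ID/(2*lam) + lam * I2 / 2) := this
      _ = ID + lam^2 * I2 := by field_simp
  -- boundary relation
  have hζ'1 : s * ζ' 1 = g - lam * ℓ := by linarith
  have key2 : s*(2*lam*IF) = 2*lam*s*((lam+(n:ℝ)^2)*I2 + I1) - 2*lam*(g - lam*ℓ)*ℓ := by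
    have hr : s * (2*lam*((lam+(n:ℝ)^2)*I2 + I1 - ζ' 1 * ℓ))
        = 2*lam*s*((lam+(n:ℝ)^2)*I2+I1) - 2*lam*(s*ζ' 1)*ℓ := by ring
    rw [hIFeq, hr, hζ'1]
  have hsmul : s*(2*lam*IF) ≤ s*(ID + lam^2 * I2) :=
    mul_le_mul_of_nonneg_left hIF2 hspos.le
  -- final inequality in multiplied form
  have final : lam^2*(s*I2 + ℓ^2) ≤ s*ID + g^2 := by
    nlinarith [hsmul, key2, sq_nonneg (g - lam*ℓ),
      mul_nonneg (mul_nonneg hlam.le hspos.le) hI1,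
      mul_nonneg (mul_nonneg (mul_nonneg hlam.le hspos.le) hn2.le) hI2]
  have step1 : lam^2 * (I2 + ℓ^2 / s) = (lam^2*(s*I2 + ℓ^2))/s := by
    field_simp
  have step3 : (s*ID + g^2)/s = ID + g^2 / s := by
    field_simp
  calc lam^2 * (I2 + ℓ^2 / s) = (lam^2*(s*I2 + ℓ^2))/s := step1
    _ ≤ (s*ID + g^2)/s := (div_le_div_iff_of_pos_right hspos).mpr final
    _ = ID + g^2 / s := step3
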